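/- Let H be a complex inner product space and B : H × H → L¹([0,2π), dθ) a map that is conjugate-linear in the first argument and linear in the second argument, such that for every ψ ∈ H the function B(ψ,ψ) is nonnegative almost everywhere and ∫_0^{2π} B(ψ,ψ)(θ) dθ = 2π‖ψ‖². Then for all ψ, φ ∈ H, ‖B(ψ,φ)‖_{L¹} ≤ 2π‖ψ‖‖φ‖. -/

import Mathlib

open MeasureTheory Real Set
open scoped ComplexConjugate ComplexOrder

private lemma ptwise (a b u v : ℂ) (hu : 0 ≤ u) (hv : 0 ≤ v)
    (hI : 0 ≤ u + Complex.I * a + conj Complex.I * b + (conj Complex.I * Complex.I) * v)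
    (hq : ∀ q : ℚ, 0 ≤ u + Complex.exp (((q : ℝ) : ℂ) * Complex.I) * a
      + conj (Complex.exp (((q : ℝ) : ℂ) * Complex.I)) * b
      + (conj (Complex.exp (((q : ℝ) : ℂ) * Complex.I)) * Complex.exp (((q : ℝ) : ℂ) * Complex.I)) * v) :
    ‖a‖ ≤ u.re / 2 + v.re / 2 := by
  rw [Complex.le_def] at hu hv
  obtain ⟨hur, hui⟩ := hu
  obtain ⟨hvr, hvi⟩ := hv
  simp only [Complex.zero_re, Complex.zero_im] at hur hui hvr hvi
  have hconjexp : ∀ t : ℝ, conj (Complex.exp ((t : ℂ) * Complex.I))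
      = Complex.exp (-(t : ℂ) * Complex.I) := by
    intro t
    rw [← Complex.exp_conj]
    congr 1
    simp [Complex.ext_iff]
  have hcoeff : ∀ t : ℝ, conj (Complex.exp ((t : ℂ) * Complex.I))
      * Complex.exp ((t : ℂ) * Complex.I) = 1 := by
    intro t
    rw [hconjexp, ← Complex.exp_add]
    ring_nf
    exact Complex.exp_zero
  -- b = conj a
  have h0 := hq 0
  have hI' := hI
  rw [Complex.le_def] at h0 hI'
  have h0i := h0.2
  have hIi := hI'.2
  simp only [Rat.cast_zero, Complex.ofReal_zero, zero_mul, Complex.exp_zero, map_one, one_mul,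
    Complex.conj_I, Complex.add_im, Complex.mul_im, Complex.zero_im, Complex.I_re, Complex.I_im,
    Complex.neg_im, Complex.neg_re, Complex.mul_re, Complex.one_re, Complex.one_im] at h0i hIi
  have hb : b = conj a := by
    apply Complex.ext <;> simp only [Complex.conj_re, Complex.conj_im] <;>
      nlinarith [h0i, hIi, hui, hvi]
  -- real inequality for rational angles
  have hqr : ∀ q : ℚ, 0 ≤ u.re + 2 * (Complex.exp (((q : ℝ) : ℂ) * Complex.I) * a).re + v.re := by
    intro q
    have h := hq q
    rw [hcoeff, hb] at h
    rw [Complex.le_def] at h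
    have hre := h.1
    have hcr : (conj (Complex.exp (((q : ℝ) : ℂ) * Complex.I)) * conj a).re
        = (Complex.exp (((q : ℝ) : ℂ) * Complex.I) * a).re := by
      rw [← map_mul]
      exact Complex.conj_re _
    simp only [Complex.zero_re, Complex.add_re, one_mul] at hre
    linarith [hre, hcr.le, hcr.ge]
  -- extend to all real angles by density
  have hreal : ∀ t : ℝ, 0 ≤ u.re + 2 * (Complex.exp ((t : ℂ) * Complex.I) * a).re + v.re := by
    have hcont : Continuous fun t : ℝ =>
        u.re + 2 * (Complex.exp ((t : ℂ) * Complex.I) * a).re + v.re := by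
      fun_prop
    have hclosed : IsClosed {t : ℝ |
        0 ≤ u.re + 2 * (Complex.exp ((t : ℂ) * Complex.I) * a).re + v.re} :=
      isClosed_le continuous_const hcont
    have hsub : closure (Set.range ((↑) : ℚ → ℝ))
        ⊆ {t : ℝ | 0 ≤ u.re + 2 * (Complex.exp ((t : ℂ) * Complex.I) * a).re + v.re} := by
      apply hclosed.closure_subset_iff.mpr
      rintro _ ⟨q, rfl⟩
      exact hqr q
    intro t
    exact hsub (by rw [Rat.denseRange_cast.closure_eq]; trivial)
  -- choose the optimal angle
  have hopt : Complex.exp (((π - Complex.arg a : ℝ) : ℂ) * Complex.I) * a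
      = -(‖a‖ : ℂ) := by
    nth_rewrite 2 [← Complex.norm_mul_exp_arg_mul_I a]
    have h1 : Complex.exp (((π - Complex.arg a : ℝ) : ℂ) * Complex.I)
        * ((‖a‖ : ℂ) * Complex.exp ((Complex.arg a : ℂ) * Complex.I))
        = (‖a‖ : ℂ) * (Complex.exp (((π - Complex.arg a : ℝ) : ℂ) * Complex.I)
            * Complex.exp ((Complex.arg a : ℂ) * Complex.I)) := by ring
    rw [h1, ← Complex.exp_add]
    have h2 : ((π - Complex.arg a : ℝ) : ℂ) * Complex.I + (Complex.arg a : ℂ) * Complex.I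
        = (π : ℂ) * Complex.I := by push_cast; ring
    rw [h2, Complex.exp_pi_mul_I]
    ring
  have hfin := hreal (π - Complex.arg a)
  rw [hopt] at hfin
  simp only [Complex.neg_re, Complex.ofReal_re] at hfin
  linarith

theorem phase_observable_L1_bounded
    {H : Type*} [NormedAddCommGroup H] [InnerProductSpace ℂ H]
    (B : H → H → Lp ℂ 1 (volume.restrict (Ico (0 : ℝ) (2 * π))))
    (hadd₁ : ∀ ψ ψ' φ : H, B (ψ + ψ') φ = B ψ φ + B ψ' φ)
    (hsmul₁ : ∀ (c : ℂ) (ψ φ : H), B (c • ψ) φ = (conj c) • B ψ φ)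
    (hadd₂ : ∀ ψ φ φ' : H, B ψ (φ + φ') = B ψ φ + B ψ φ')
    (hsmul₂ : ∀ (c : ℂ) (ψ φ : H), B ψ (c • φ) = c • B ψ φ)
    (hpos : ∀ ψ : H, ∀ᵐ θ ∂(volume.restrict (Ico (0 : ℝ) (2 * π))),
      0 ≤ (B ψ ψ : ℝ → ℂ) θ)
    (hnorm : ∀ ψ : H, ∫ θ, (B ψ ψ : ℝ → ℂ) θ ∂(volume.restrict (Ico (0 : ℝ) (2 * π)))
      = ((2 * π * ‖ψ‖ ^ 2 : ℝ) : ℂ)) :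
    ∀ ψ φ : H, ‖B ψ φ‖ ≤ 2 * π * ‖ψ‖ * ‖φ‖ := by
  -- auxiliary AM-GM bound
  have aux : ∀ ψ φ : H, ‖B ψ φ‖ ≤ π * ‖ψ‖ ^ 2 + π * ‖φ‖ ^ 2 := by
    intro ψ φ
    have hc : ∀ c : ℂ, ∀ᵐ θ ∂(volume.restrict (Ico (0 : ℝ) (2 * π))),
        0 ≤ (B ψ ψ : ℝ → ℂ) θ + c * (B ψ φ : ℝ → ℂ) θ
        + conj c * (B φ ψ : ℝ → ℂ) θ + (conj c * c) * (B φ φ : ℝ → ℂ) θ := by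
      intro c
      have hB : B (ψ + c • φ) (ψ + c • φ)
          = (B ψ ψ + c • B ψ φ) + ((conj c) • B φ ψ + (conj c) • (c • B φ φ)) := by
        rw [hadd₁, hadd₂, hadd₂, hsmul₂, hsmul₁, hsmul₁, hsmul₂]
      have h0 := hpos (ψ + c • φ)
      rw [hB] at h0
      filter_upwards [h0,
        Lp.coeFn_add (B ψ ψ + c • B ψ φ) ((conj c) • B φ ψ + (conj c) • (c • B φ φ)),
        Lp.coeFn_add (B ψ ψ) (c • B ψ φ),
        Lp.coeFn_add ((conj c) • B φ ψ) ((conj c) • (c • B φ φ)),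
        Lp.coeFn_smul c (B ψ φ),
        Lp.coeFn_smul (conj c) (B φ ψ),
        Lp.coeFn_smul (conj c) (c • B φ φ),
        Lp.coeFn_smul c (B φ φ)] with θ p e1 e2 e3 e4 e5 e6 e7
      rw [e1, Pi.add_apply, e2, e3, Pi.add_apply, Pi.add_apply, e4, e5, e6,
        Pi.smul_apply, Pi.smul_apply, Pi.smul_apply, e7, Pi.smul_apply,
        smul_eq_mul, smul_eq_mul, smul_eq_mul, smul_eq_mul] at p
      have heq : (B ψ ψ : ℝ → ℂ) θ + c * (B ψ φ : ℝ → ℂ) θ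
          + conj c * (B φ ψ : ℝ → ℂ) θ + (conj c * c) * (B φ φ : ℝ → ℂ) θ
          = (B ψ ψ : ℝ → ℂ) θ + c * (B ψ φ : ℝ → ℂ) θ
          + (conj c * (B φ ψ : ℝ → ℂ) θ + conj c * (c * (B φ φ : ℝ → ℂ) θ)) := by ring
      rw [heq]
      exact p
    have hq : ∀ᵐ θ ∂(volume.restrict (Ico (0 : ℝ) (2 * π))), ∀ q : ℚ,
        0 ≤ (B ψ ψ : ℝ → ℂ) θ
        + Complex.exp (((q : ℝ) : ℂ) * Complex.I) * (B ψ φ : ℝ → ℂ) θ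
        + conj (Complex.exp (((q : ℝ) : ℂ) * Complex.I)) * (B φ ψ : ℝ → ℂ) θ
        + (conj (Complex.exp (((q : ℝ) : ℂ) * Complex.I)) * Complex.exp (((q : ℝ) : ℂ) * Complex.I))
            * (B φ φ : ℝ → ℂ) θ :=
      ae_all_iff.mpr fun q => hc (Complex.exp (((q : ℝ) : ℂ) * Complex.I))
    have key : ∀ᵐ θ ∂(volume.restrict (Ico (0 : ℝ) (2 * π))), ‖(B ψ φ : ℝ → ℂ) θ‖
        ≤ ((B ψ ψ : ℝ → ℂ) θ).re / 2 + ((B φ φ : ℝ → ℂ) θ).re / 2 := by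
      filter_upwards [hpos ψ, hpos φ, hc Complex.I, hq] with θ h1 h2 h3 h4
      exact ptwise _ _ _ _ h1 h2 h3 h4
    have iu : Integrable (B ψ ψ : ℝ → ℂ) (volume.restrict (Ico (0 : ℝ) (2 * π))) :=
      L1.integrable_coeFn (B ψ ψ)
    have iv : Integrable (B φ φ : ℝ → ℂ) (volume.restrict (Ico (0 : ℝ) (2 * π))) :=
      L1.integrable_coeFn (B φ φ)
    have inorm : Integrable (fun θ => ‖(B ψ φ : ℝ → ℂ) θ‖)
        (volume.restrict (Ico (0 : ℝ) (2 * π))) := (L1.integrable_coeFn (B ψ φ)).norm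
    have ireu : Integrable (fun θ => ((B ψ ψ : ℝ → ℂ) θ).re)
        (volume.restrict (Ico (0 : ℝ) (2 * π))) := iu.re
    have irev : Integrable (fun θ => ((B φ φ : ℝ → ℂ) θ).re)
        (volume.restrict (Ico (0 : ℝ) (2 * π))) := iv.re
    have hiu : ∫ θ, ((B ψ ψ : ℝ → ℂ) θ).re ∂(volume.restrict (Ico (0 : ℝ) (2 * π)))
        = 2 * π * ‖ψ‖ ^ 2 := by
      have := integral_re iu
      simp only [RCLike.re_to_complex] at this
      rw [this, hnorm ψ, Complex.ofReal_re]
    have hiv : ∫ θ, ((B φ φ : ℝ → ℂ) θ).re ∂(volume.restrict (Ico (0 : ℝ) (2 * π)))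
        = 2 * π * ‖φ‖ ^ 2 := by
      have := integral_re iv
      simp only [RCLike.re_to_complex] at this
      rw [this, hnorm φ, Complex.ofReal_re]
    calc ‖B ψ φ‖ = ∫ θ, ‖(B ψ φ : ℝ → ℂ) θ‖ ∂(volume.restrict (Ico (0 : ℝ) (2 * π))) :=
          L1.norm_eq_integral_norm (B ψ φ)
      _ ≤ ∫ θ, (((B ψ ψ : ℝ → ℂ) θ).re / 2 + ((B φ φ : ℝ → ℂ) θ).re / 2)
            ∂(volume.restrict (Ico (0 : ℝ) (2 * π))) :=
          integral_mono_ae inorm ((ireu.div_const 2).add (irev.div_const 2)) key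
      _ = (∫ θ, ((B ψ ψ : ℝ → ℂ) θ).re ∂(volume.restrict (Ico (0 : ℝ) (2 * π)))) / 2
          + (∫ θ, ((B φ φ : ℝ → ℂ) θ).re ∂(volume.restrict (Ico (0 : ℝ) (2 * π)))) / 2 := by
          rw [integral_add (ireu.div_const 2) (irev.div_const 2), integral_div, integral_div]
      _ = π * ‖ψ‖ ^ 2 + π * ‖φ‖ ^ 2 := by rw [hiu, hiv]; ring
  intro ψ φ
  by_cases hψ : ψ = 0
  · have h := hsmul₁ 0 0 φ
    rw [zero_smul] at h
    simp only [map_zero, zero_smul] at h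
    rw [hψ, h]
    simp [hψ]
  by_cases hφ : φ = 0
  · have h := hsmul₂ 0 ψ 0
    rw [zero_smul] at h
    simp only [zero_smul] at h
    rw [hφ, h]
    simp [hφ]
  · have hψ0 : (0 : ℝ) < ‖ψ‖ := norm_pos_iff.mpr hψ
    have hφ0 : (0 : ℝ) < ‖φ‖ := norm_pos_iff.mpr hφ
    set t : ℝ := Real.sqrt (‖φ‖ / ‖ψ‖) with ht
    have ht0 : 0 < t := Real.sqrt_pos.mpr (by positivity)
    have ht2 : t ^ 2 = ‖φ‖ / ‖ψ‖ := Real.sq_sqrt (by positivity)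
    have htne : ((t : ℂ)) ≠ 0 := by exact_mod_cast ht0.ne'
    have hBt : B ((t : ℂ) • ψ) (((t : ℂ))⁻¹ • φ) = B ψ φ := by
      rw [hsmul₁, hsmul₂, smul_smul, Complex.conj_ofReal, mul_inv_cancel₀ htne, one_smul]
    have h := aux ((t : ℂ) • ψ) (((t : ℂ))⁻¹ • φ)
    rw [hBt] at h
    have hn1 : ‖(t : ℂ) • ψ‖ = t * ‖ψ‖ := by
      rw [norm_smul, Complex.norm_real, Real.norm_of_nonneg ht0.le]
    have hn2 : ‖((t : ℂ))⁻¹ • φ‖ = t⁻¹ * ‖φ‖ := by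
      rw [norm_smul, norm_inv, Complex.norm_real, Real.norm_of_nonneg ht0.le]
    rw [hn1, hn2] at h
    have hval : π * (t * ‖ψ‖) ^ 2 + π * (t⁻¹ * ‖φ‖) ^ 2 = 2 * π * ‖ψ‖ * ‖φ‖ := by
      rw [mul_pow, mul_pow, inv_pow, ht2]
      field_simp
      ring
    rw [hval] at h
    exact h
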